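/- Let E be a semistable elliptic curve over ℚ. Suppose Q ∈ E(ℚ̄) has order 3 and generates a Galois-stable subgroup of E[3] isomorphic to μ_3 (Galois acts on ⟨Q⟩ via the mod 3 cyclotomic character), R ∈ E(ℚ)[9] is a rational point of 3-power order, and S ∈ E(ℚ(√−3))[16] is a point of 2-power order defined over ℚ(√−3). Then P = Q + R + S is an almost rational torsion point over ℚ. -/

import Mathlib

open WeierstrassCurve WeierstrassCurve.Affine
open scoped WeierstrassCurve.Affine

noncomputable section

abbrev Qbar : Type := AlgebraicClosure ℚ
abbrev Gal : Type := Qbar ≃ₐ[ℚ] Qbar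

instance : DecidableEq Qbar := Classical.decEq _

/-- `W` is semistable: at every prime `p` it admits an integral Weierstrass model
(isomorphic to `W` over `ℚ` via a change of variables) whose reduction modulo `p`
is not additive, i.e. `p ∤ Δ` (good reduction) or `p ∤ c₄` (multiplicative reduction). -/
def IsSemistable (W : WeierstrassCurve ℚ) : Prop :=
  ∀ p : ℕ, p.Prime →
    ∃ (V : WeierstrassCurve ℤ) (C : WeierstrassCurve.VariableChange ℚ),
      V.map (Int.castRingHom ℚ) = C • W ∧
      (¬ (p : ℤ) ∣ V.Δ ∨ ¬ (p : ℤ) ∣ V.c₄)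

variable (W : WeierstrassCurve ℚ)

/-- The action of `σ ∈ Gal(ℚ̄/ℚ)` on the group `E(ℚ̄) = (W⁄Qbar).Point` of `ℚ̄`-points of `W`. -/
def galAct (σ : Gal) : (W⁄Qbar).Point →+ (W⁄Qbar).Point :=
  WeierstrassCurve.Affine.Point.map (W' := W) σ.toAlgHom

/-- `P ∈ E(ℚ̄)` is almost rational over `ℚ`: whenever `σ P + τ P = 2 P` for
`σ, τ ∈ Gal(ℚ̄/ℚ)`, we have `P = σ P = τ P`. -/
def AlmostRational (P : (W⁄Qbar).Point) : Prop :=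
  ∀ σ τ : Gal, galAct W σ P + galAct W τ P = 2 • P →
    galAct W σ P = P ∧ galAct W τ P = P

/-- The Galois module generated by `P` and all of its Galois conjugates. -/
def galModule (P : (W⁄Qbar).Point) : AddSubgroup (W⁄Qbar).Point :=
  AddSubgroup.closure {Q | ∃ σ : Gal, Q = galAct W σ P}

/-- The subgroup `E[n]` of points killed by `n`. -/
def torsion (n : ℕ) : AddSubgroup (W⁄Qbar).Point where
  carrier := {P | n • P = 0}
  zero_mem' := smul_zero n
  add_mem' := by
    intro a b ha hb
    simp only [Set.mem_setOf_eq] at *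
    rw [nsmul_add, ha, hb, add_zero]
  neg_mem' := by
    intro a ha
    simp only [Set.mem_setOf_eq] at *
    rw [neg_nsmul, ha, neg_zero]

/-- A Galois-stable subgroup of points. -/
def IsGaloisStable (N : AddSubgroup (W⁄Qbar).Point) : Prop :=
  ∀ σ : Gal, ∀ x ∈ N, galAct W σ x ∈ N

/-- `E[n]` is reducible: it contains a nonzero proper Galois-stable subgroup. -/
def TorsionIsReducible (n : ℕ) : Prop :=
  ∃ N : AddSubgroup (W⁄Qbar).Point, IsGaloisStable W N ∧ N ≤ torsion W n ∧
    N ≠ ⊥ ∧ N ≠ torsion W n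

/-- The `ℓ`-primary part of a subgroup of points. -/
def primaryPart (ℓ : ℕ) (N : AddSubgroup (W⁄Qbar).Point) : AddSubgroup (W⁄Qbar).Point where
  carrier := {x | x ∈ N ∧ ∃ j : ℕ, ℓ ^ j • x = 0}
  zero_mem' := ⟨N.zero_mem, 0, smul_zero _⟩
  add_mem' := by
    rintro a b ⟨haN, i, hi⟩ ⟨hbN, j, hj⟩
    refine ⟨N.add_mem haN hbN, i + j, ?_⟩
    have ha' : ℓ ^ (i + j) • a = 0 := by rw [pow_add, mul_nsmul, hi, nsmul_zero]
    have hb' : ℓ ^ (i + j) • b = 0 := by rw [pow_add, mul_comm, mul_nsmul, hj, nsmul_zero]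
    rw [nsmul_add, ha', hb', add_zero]
  neg_mem' := by
    rintro a ⟨haN, i, hi⟩
    exact ⟨N.neg_mem haN, i, by rw [neg_nsmul, hi, neg_zero]⟩

/-- The ring of all algebraic integers inside `ℚ̄`. -/
abbrev Zbar : Subalgebra ℤ Qbar := integralClosure ℤ Qbar

/-- `σ` belongs to the inertia subgroup of `Gal(ℚ̄/ℚ)` attached to the maximal ideal `Q`
of the ring of algebraic integers: `σ x ≡ x mod Q` for every algebraic integer `x`. -/
def IsInInertia (Q : Ideal Zbar) (σ : Gal) : Prop :=
  ∀ x : Zbar, ∃ y ∈ Q, (y : Qbar) = σ (x : Qbar) - (x : Qbar)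

/-- A Galois-stable set of points is unramified at the rational prime `p` if the inertia
group of every prime of `ℚ̄` above `p` acts trivially on it. -/
def UnramifiedAt (p : ℕ) (N : AddSubgroup (W⁄Qbar).Point) : Prop :=
  ∀ Q : Ideal Zbar, Q.IsMaximal → (p : Zbar) ∈ Q →
    ∀ σ : Gal, IsInInertia Q σ → ∀ x ∈ N, galAct W σ x = x


/-- On a semistable elliptic curve `E/ℚ`, if `Q` has order `3` and generates a
`μ₃`-subgroup of `E[3]` (Galois acts on `⟨Q⟩` by the mod `3` cyclotomic character),
`R ∈ E(ℚ)[9]` is rational of `3`-power order, and `S ∈ E(ℚ(√-3))[16]` has `2`-power order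
and is defined over `ℚ(√-3)`, then `P = Q + R + S` is an almost rational torsion point
over `ℚ`. -/
theorem almostRational_of_add_mu3_rational_sqrtNeg3
    (W : WeierstrassCurve ℚ) [W.IsElliptic] (hW : IsSemistable W)
    (Q R S : (W⁄Qbar).Point)
    (hQ : addOrderOf Q = 3)
    (hQmu : ∃ ζ : Qbar, IsPrimitiveRoot ζ 3 ∧
      ∀ (σ : Gal) (a : ℕ), σ ζ = ζ ^ a → galAct W σ Q = a • Q)
    (hR9 : 9 • R = 0) (hRrat : ∀ σ : Gal, galAct W σ R = R)
    (hS16 : 16 • S = 0)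
    (hSfield : ∀ s : Qbar, s ^ 2 = -3 → ∀ σ : Gal, σ s = s → galAct W σ S = S) :
    IsOfFinAddOrder (Q + R + S) ∧ AlmostRational W (Q + R + S) := by
  obtain ⟨ζ, hζ, hQact⟩ := hQmu
  have h3Q : 3 • Q = 0 := by rw [← hQ]; exact addOrderOf_nsmul_eq_zero Q
  have hQ0 : Q ≠ 0 := by
    intro h
    rw [h, addOrderOf_zero] at hQ
    omega
  have h2Q : 2 • Q ≠ 0 := by
    intro h
    have := addOrderOf_dvd_of_nsmul_eq_zero h
    rw [hQ] at this
    omega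
  have hz3 : ζ ^ 3 = 1 := hζ.pow_eq_one
  have hz1 : ζ ≠ 1 := hζ.ne_one (by norm_num)
  have hzq : ζ ^ 2 + ζ + 1 = 0 := by
    have h : (ζ - 1) * (ζ ^ 2 + ζ + 1) = 0 := by linear_combination hz3
    rcases mul_eq_zero.mp h with h | h
    · exact absurd (sub_eq_zero.mp h) hz1
    · exact h
  -- For each σ, either σ fixes Q, R, S, or σ Q = 2 • Q
  have key : ∀ σ : Gal,
      (galAct W σ Q = Q ∧ galAct W σ R = R ∧ galAct W σ S = S) ∨ galAct W σ Q = 2 • Q := by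
    intro σ
    have hx3 : (σ ζ) ^ 3 = 1 := by rw [← map_pow, hz3, map_one]
    have hx1 : σ ζ ≠ 1 := by
      intro h
      exact hz1 (σ.injective (by rw [h, map_one]))
    have hxq : (σ ζ) ^ 2 + σ ζ + 1 = 0 := by
      have h : (σ ζ - 1) * ((σ ζ) ^ 2 + σ ζ + 1) = 0 := by linear_combination hx3
      rcases mul_eq_zero.mp h with h | h
      · exact absurd (sub_eq_zero.mp h) hx1
      · exact h
    have h : (σ ζ - ζ) * (σ ζ - ζ ^ 2) = 0 := by
      linear_combination hxq - (σ ζ) * hzq + hz3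
    rcases mul_eq_zero.mp h with h | h
    · left
      have hzz : σ ζ = ζ := sub_eq_zero.mp h
      refine ⟨by simpa using hQact σ 1 (by simpa using hzz), hRrat σ, ?_⟩
      have hs : (ζ - ζ ^ 2) ^ 2 = -3 := by linear_combination hzq + (ζ - 2) * hz3
      exact hSfield _ hs σ (by rw [map_sub, map_pow, hzz])
    · right
      exact hQact σ 2 (sub_eq_zero.mp h)
  constructor
  · rw [isOfFinAddOrder_iff_nsmul_eq_zero]
    refine ⟨144, by norm_num, ?_⟩
    rw [show (144 : ℕ) • (Q + R + S) = 48 • ((3:ℕ) • Q) + 16 • ((9:ℕ) • R) + 9 • ((16:ℕ) • S)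
      from by abel, h3Q, hR9, hS16]
    abel
  · intro σ τ hστ
    -- Expand the relation and split it into a 3-torsion part and a 2-torsion part
    have e1 : galAct W σ (Q + R + S) = galAct W σ Q + R + galAct W σ S := by
      rw [map_add, map_add, hRrat]
    have e2 : galAct W τ (Q + R + S) = galAct W τ Q + R + galAct W τ S := by
      rw [map_add, map_add, hRrat]
    have h' : (galAct W σ Q + R + galAct W σ S) + (galAct W τ Q + R + galAct W τ S)
        = 2 • Q + 2 • R + 2 • S := by
      rw [← e1, ← e2, hστ]
      abel
    have h0 : (galAct W σ Q + galAct W τ Q - 2 • Q)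
        + (galAct W σ S + galAct W τ S - 2 • S) = 0 := by
      rw [show (galAct W σ Q + galAct W τ Q - 2 • Q)
            + (galAct W σ S + galAct W τ S - 2 • S)
          = ((galAct W σ Q + R + galAct W σ S) + (galAct W τ Q + R + galAct W τ S))
            - (2 • Q + 2 • R + 2 • S) from by abel, h', sub_self]
    set A := galAct W σ Q + galAct W τ Q - 2 • Q with hAdef
    set B := galAct W σ S + galAct W τ S - 2 • S with hBdef
    have hmap3 : ∀ υ : Gal, 3 • galAct W υ Q = 0 := fun υ => by
      rw [← map_nsmul, h3Q, map_zero]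
    have hmap16 : ∀ υ : Gal, 16 • galAct W υ S = 0 := fun υ => by
      rw [← map_nsmul, hS16, map_zero]
    have h3A : 3 • A = 0 := by
      rw [hAdef, show (3:ℕ) • (galAct W σ Q + galAct W τ Q - 2 • Q)
          = 3 • galAct W σ Q + 3 • galAct W τ Q - 2 • ((3:ℕ) • Q) from by abel,
        hmap3 σ, hmap3 τ, h3Q]
      abel
    have h16B : 16 • B = 0 := by
      rw [hBdef, show (16:ℕ) • (galAct W σ S + galAct W τ S - 2 • S)
          = 16 • galAct W σ S + 16 • galAct W τ S - 2 • ((16:ℕ) • S) from by abel,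
        hmap16 σ, hmap16 τ, hS16]
      abel
    have hAeqnB : A = -B := eq_neg_of_add_eq_zero_left h0
    have h16A : 16 • A = 0 := by
      rw [hAeqnB, show (16:ℕ) • -B = -((16:ℕ) • B) from by abel, h16B, neg_zero]
    have h15A : 15 • A = 0 := by
      rw [show (15:ℕ) • A = 5 • ((3:ℕ) • A) from by abel, h3A]
      abel
    have hA : A = 0 := by
      rw [show A = (16:ℕ) • A - (15:ℕ) • A from by abel, h16A, h15A, sub_zero]
    have hsum : galAct W σ Q + galAct W τ Q = 2 • Q := sub_eq_zero.mp hA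
    rcases key σ with ⟨hσQ, hσR, hσS⟩ | hσ
    · rcases key τ with ⟨hτQ, hτR, hτS⟩ | hτ
      · constructor
        · rw [map_add, map_add, hσQ, hσR, hσS]
        · rw [map_add, map_add, hτQ, hτR, hτS]
      · exfalso
        rw [hσQ, hτ] at hsum
        -- Q + 2 • Q = 2 • Q
        exact hQ0 (by
          have : Q + 2 • Q = 0 + 2 • Q := by rw [zero_add]; exact hsum
          exact add_right_cancel this)
    · exfalso
      rcases key τ with ⟨hτQ, hτR, hτS⟩ | hτ
      · rw [hσ, hτQ] at hsum
        -- 2 • Q + Q = 2 • Q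
        exact hQ0 (by
          have : 2 • Q + Q = 2 • Q + 0 := by rw [add_zero]; exact hsum
          exact add_left_cancel this)
      · rw [hσ, hτ] at hsum
        -- 2 • Q + 2 • Q = 2 • Q
        exact h2Q (by
          have : 2 • Q + 2 • Q = 2 • Q + 0 := by rw [add_zero]; exact hsum
          exact add_left_cancel this)

end
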